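/- Assume $\mu > \hat\mu(h)$ for all $h$ in an interval $[0,\bar h] \subseteq [0,1)$, with $0 \le x^a \le x^v \le 1$, $q \in (0,1)$, and $(x^a,x^v) \ne (1,1)$. Then the leading (largest) eigenvalue $e_1(h) = \hat\mu(h) - \mu < 0$ of the Jacobian is nondecreasing in $h$, i.e., $|e_1(h)|$ is nonincreasing in $h$: higher homophily slows asymptotic convergence to the disease-free state. -/
import Mathlib

/-- Helper: comparing via squares for nonnegative bound. -/
lemma stmt_12_sq_le {s t : ℝ} (ht : 0 ≤ t) (h : s^2 ≤ t^2) : s ≤ t := by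
  nlinarith [sq_nonneg (s - t), sq_nonneg (s + t)]

/-- Assume `μ > μ̂(h)` for all `h ∈ [0, h̄] ⊆ [0,1)`, with
`0 ≤ xa ≤ xv ≤ 1`, `q ∈ (0,1)` and `(xa,xv) ≠ (1,1)`.  Then the leading
eigenvalue `e₁(h) = μ̂(h) - μ` of the Jacobian is negative and nondecreasing in
`h` on `[0, h̄]`, i.e. `|e₁(h)|` is nonincreasing in `h`: higher homophily slows
asymptotic convergence to the disease-free state. -/
theorem stmt_12 (q xa xv μ hbar : ℝ)
    (hq : q ∈ Set.Ioo (0:ℝ) 1)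
    (hxa : 0 ≤ xa) (hxav : xa ≤ xv) (hxv : xv ≤ 1)
    (hne : (xa, xv) ≠ (1, 1))
    (hhbar : 0 ≤ hbar) (hhbar1 : hbar < 1)
    (qa qv T Δ μhat : ℝ → ℝ)
    (hqa : ∀ h, qa h = h + (1-h)*q) (hqv : ∀ h, qv h = h + (1-h)*(1-q))
    (hT : ∀ h, T h = qa h*(1-xa) + qv h*(1-xv))
    (hΔ : ∀ h, Δ h = Real.sqrt ((T h)^2 - 4*h*(1-xa)*(1-xv)))
    (hμhat : ∀ h, μhat h = (T h + Δ h)/2)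
    (hstab : ∀ h ∈ Set.Icc 0 hbar, μhat h < μ) :
    (∀ h ∈ Set.Icc 0 hbar, μhat h - μ < 0)
    ∧ MonotoneOn (fun h => μhat h - μ) (Set.Icc 0 hbar)
    ∧ AntitoneOn (fun h => |μhat h - μ|) (Set.Icc 0 hbar) := by
  obtain ⟨hq0, hq1⟩ := hq
  set A : ℝ := 1 - xa with hA
  set V : ℝ := 1 - xv with hV
  have hV0 : 0 ≤ V := by simp [hV]; linarith
  have hAV : V ≤ A := by simp [hA, hV]; linarith
  have hA0 : 0 < A := by
    rcases lt_or_eq_of_le (le_trans hxav hxv : xa ≤ 1) with h | h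
    · simp [hA]; linarith
    · exfalso; apply hne; have : xv = 1 := le_antisymm hxv (h ▸ hxav)
      simp [h, this]
  set D : ℝ := (1-q)*A + q*V with hD
  set T0 : ℝ := q*A + (1-q)*V with hT0
  clear_value A V D T0
  have hD0 : 0 < D := by
    have h1 : 0 < (1-q)*A := mul_pos (by linarith) hA0
    have h2 : 0 ≤ q*V := mul_nonneg hq0.le hV0
    rw [hD]; linarith
  have hDT0 : A * V ≤ D * T0 := by
    rw [hD, hT0]
    nlinarith [sq_nonneg (A - V), mul_pos hq0 (by linarith : (0:ℝ) < 1 - q)]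
  have hTlin : ∀ h, T h = T0 + h * D := by
    intro h; rw [hT, hqa, hqv, hT0, hD]; ring
  -- discriminant nonneg for h ∈ [0,1]
  have hdisc : ∀ h, 0 ≤ h → h ≤ 1 → 0 ≤ (T h)^2 - 4*h*A*V := by
    intro h h0 h1
    have e : (T h)^2 - 4*h*A*V
        = (qa h*A - qv h*V)^2 + 4*((1-h)*(1-q))*((1-h)*q)*(A*V) := by
      rw [hT, hqa, hqv]; ring
    rw [e]
    have t2 : 0 ≤ 4*((1-h)*(1-q))*((1-h)*q)*(A*V) := by
      apply mul_nonneg (mul_nonneg (mul_nonneg (by norm_num) ?_) ?_)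
        (mul_nonneg hA0.le hV0)
      · exact mul_nonneg (by linarith) (by linarith)
      · exact mul_nonneg (by linarith) hq0.le
    nlinarith [sq_nonneg (qa h*A - qv h*V)]
  have hΔnn : ∀ h, 0 ≤ Δ h := by intro h; rw [hΔ]; exact Real.sqrt_nonneg _
  have hΔsq : ∀ h, 0 ≤ h → h ≤ 1 → (Δ h)^2 = (T h)^2 - 4*h*A*V := by
    intro h h0 h1
    rw [hΔ]
    exact Real.sq_sqrt (hdisc h h0 h1)
  -- the quadratic equation satisfied by μhat
  have hquad : ∀ h, 0 ≤ h → h ≤ 1 →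
      (μhat h)^2 - T h * μhat h + h*A*V = 0 := by
    intro h h0 h1
    have hs := hΔsq h h0 h1
    rw [hμhat]
    linear_combination hs / 4
  -- μhat h ≥ A*V/D, i.e. D * μhat h ≥ A*V
  have hkey : ∀ h, 0 ≤ h → h ≤ 1 → A*V ≤ D * μhat h := by
    intro h h0 h1
    have hTh : T h = T0 + h*D := hTlin h
    have hΔn := hΔnn h
    have hΔs := hΔsq h h0 h1
    have hDΔ : 0 ≤ D * Δ h := mul_nonneg hD0.le hΔn
    have hexp : D * μhat h = (D * T h + D * Δ h)/2 := by rw [hμhat]; ring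
    rcases le_or_gt (2*(A*V) - D * T h) 0 with hc | hc
    · rw [hexp]; linarith
    · have hsq : (2*(A*V) - D * T h)^2 ≤ (D * Δ h)^2 := by
        have expand : (D * Δ h)^2 - (2*(A*V) - D * T h)^2
            = 4*(A*V)*(D*T0 - A*V) := by
          linear_combination D^2 * hΔs + 4*(A*V)*D * hTh
        nlinarith [mul_nonneg hA0.le hV0]
      have hle := stmt_12_sq_le hDΔ hsq
      rw [hexp]; linarith
  -- monotonicity of μhat
  have hmono : MonotoneOn μhat (Set.Icc 0 hbar) := by
    intro h1 hm1 h2 hm2 h12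
    obtain ⟨h10, h1b⟩ := hm1
    obtain ⟨h20, h2b⟩ := hm2
    have h11 : h1 ≤ 1 := le_of_lt (lt_of_le_of_lt h1b hhbar1)
    have h21 : h2 ≤ 1 := le_of_lt (lt_of_le_of_lt h2b hhbar1)
    have q1 := hquad h1 h10 h11
    have k1 := hkey h1 h10 h11
    -- f₂(μ₁) ≤ 0
    have f2 : (μhat h1)^2 - T h2 * μhat h1 + h2*A*V ≤ 0 := by
      have e : (μhat h1)^2 - T h2 * μhat h1 + h2*A*V
          = ((μhat h1)^2 - T h1 * μhat h1 + h1*A*V)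
            + (h2 - h1) * (A*V - D * μhat h1) := by
        linear_combination (- μhat h1) * hTlin h2 + (μhat h1) * hTlin h1
      rw [e, q1]
      have hd : A*V - D * μhat h1 ≤ 0 := by linarith
      have h21' : 0 ≤ h2 - h1 := by linarith
      nlinarith [mul_nonpos_of_nonneg_of_nonpos h21' hd]
    -- conclude μhat h1 ≤ μhat h2
    have hΔ2s := hΔsq h2 h20 h21
    have hΔ2n := hΔnn h2
    rw [hμhat h2]
    rcases le_or_gt (2 * μhat h1 - T h2) 0 with hc | hc
    · linarith
    · have hsq : (2 * μhat h1 - T h2)^2 ≤ (Δ h2)^2 := by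
        rw [hΔ2s]; nlinarith [f2]
      have := stmt_12_sq_le hΔ2n hsq
      linarith
  refine ⟨fun h hh => sub_neg.mpr (hstab h hh), ?_, ?_⟩
  · intro a ha b hb hab
    simp only
    have := hmono ha hb hab
    linarith
  · intro a ha b hb hab
    simp only
    rw [abs_of_neg (sub_neg.mpr (hstab a ha)), abs_of_neg (sub_neg.mpr (hstab b hb))]
    have := hmono ha hb hab
    linarith
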